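/- Let (T0, T̃0) be a joint pair of abstract Friedrichs operators on a complex Hilbert space H. If a subspace V of the graph space W satisfies (V)-boundary conditions, then V is maximal non-negative in (W, [·|·]), i.e. V ⊆ W⁺ and no subspace of W contained in W⁺ properly contains V; moreover V^[⊥] is maximal non-positive, i.e. V^[⊥] ⊆ W⁻ and no subspace of W contained in W⁻ properly contains V^[⊥]. -/

import Mathlib

open scoped InnerProductSpace
open Filter Topology LinearPMap

noncomputable section

variable {H : Type*} [NormedAddCommGroup H] [InnerProductSpace ℂ H] [CompleteSpace H]

/-- The inner product used in the paper (antilinear in the **second** entry):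
`pInner x y = ⟪y, x⟫` in Mathlib's convention. -/
def pInner {H : Type*} [NormedAddCommGroup H] [InnerProductSpace ℂ H] (x y : H) : ℂ :=
  ⟪y, x⟫_ℂ

/-- A pair of densely defined operators with common domain satisfying conditions (T1) and (T2). -/
structure IsDualPairT12 (T0 T0t : H →ₗ.[ℂ] H) (lam : ℝ) : Prop where
  dom_eq : T0.domain = T0t.domain
  dense' : Dense (T0.domain : Set H)
  sym : ∀ (φ : T0.domain) (ψ : T0t.domain), pInner (T0 φ) (ψ : H) = pInner (φ : H) (T0t ψ)
  lam_pos : 0 < lam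
  bound : ∀ (x : H) (hx : x ∈ T0.domain),
    ‖T0 ⟨x, hx⟩ + T0t ⟨x, dom_eq.le hx⟩‖ ≤ 2 * lam * ‖x‖

/-- A joint pair of abstract Friedrichs operators: (T1), (T2) and (T3). -/
structure IsFriedrichsPair (T0 T0t : H →ₗ.[ℂ] H) (lam mu : ℝ)
    extends IsDualPairT12 T0 T0t lam : Prop where
  mu_pos : 0 < mu
  coercive : ∀ (x : H) (hx : x ∈ T0.domain),
    2 * mu * ‖x‖ ^ 2 ≤ (pInner (T0 ⟨x, hx⟩ + T0t ⟨x, dom_eq.le hx⟩) x).re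

/-- The boundary form `[u|v] := ⟨T₁u , v⟩ − ⟨u , T̃₁v⟩` on the graph space
`W := dom T₁ = dom (T̃₀)*`.  The hypothesis `hW` expresses the fact `dom T₁ = dom T̃₁`. -/
def bform (T0 T0t : H →ₗ.[ℂ] H) (hW : T0t.adjoint.domain = T0.adjoint.domain)
    (u v : T0t.adjoint.domain) : ℂ :=
  pInner (T0t.adjoint u) (v : H) - pInner (u : H) (T0.adjoint ⟨(v : H), hW.le v.2⟩)

/-- `X^[⊥]`, the `[·|·]`-orthogonal complement of `X ⊆ W` in the graph space. -/
def iorth (T0 T0t : H →ₗ.[ℂ] H) (hW : T0t.adjoint.domain = T0.adjoint.domain)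
    (X : Set ↥T0t.adjoint.domain) : Set ↥T0t.adjoint.domain :=
  {u | ∀ v ∈ X, bform T0 T0t hW u v = 0}

/-- `W⁺ = {u ∈ W : [u|u] ≥ 0}`. -/
def Wplus (T0 T0t : H →ₗ.[ℂ] H) (hW : T0t.adjoint.domain = T0.adjoint.domain) :
    Set ↥T0t.adjoint.domain :=
  {u | 0 ≤ (bform T0 T0t hW u u).re}

/-- `W⁻ = {u ∈ W : [u|u] ≤ 0}`. -/
def Wminus (T0 T0t : H →ₗ.[ℂ] H) (hW : T0t.adjoint.domain = T0.adjoint.domain) :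
    Set ↥T0t.adjoint.domain :=
  {u | (bform T0 T0t hW u u).re ≤ 0}

/-- (V)-boundary conditions for a subset `V` of the graph space `W`. -/
def VBC (T0 T0t : H →ₗ.[ℂ] H) (hW : T0t.adjoint.domain = T0.adjoint.domain)
    (V : Set ↥T0t.adjoint.domain) : Prop :=
  V ⊆ Wplus T0 T0t hW ∧ iorth T0 T0t hW V ⊆ Wminus T0 T0t hW ∧
    V = iorth T0 T0t hW (iorth T0 T0t hW V)

/-- The graph norm `‖u‖_{T₁} = ‖u‖ + ‖T₁ u‖` on the graph space. -/
def gnorm (T0t : H →ₗ.[ℂ] H) (u : T0t.adjoint.domain) : ℝ :=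
  ‖(u : H)‖ + ‖T0t.adjoint u‖

/-- The distance associated with the graph norm. -/
def gdist (T0t : H →ₗ.[ℂ] H) (u v : T0t.adjoint.domain) : ℝ := gnorm T0t (u - v)

/-- Closedness (sequential) in the graph-norm topology of `W`. -/
def GClosed (T0t : H →ₗ.[ℂ] H) (X : Set ↥T0t.adjoint.domain) : Prop :=
  ∀ f : ℕ → ↥T0t.adjoint.domain, (∀ n, f n ∈ X) →
    ∀ l, Tendsto (fun n => gdist T0t (f n) l) atTop (𝓝 0) → l ∈ X

/-- `W₀` (the domain of the closure of `T₀`), viewed as a subset of the graph space `W`. -/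
def W0set (T0 T0t : H →ₗ.[ℂ] H) : Set ↥T0t.adjoint.domain :=
  {u | (u : H) ∈ T0.closure.domain}

/-- The graph inner product on `W` (in the paper's convention). -/
def gip (T0t : H →ₗ.[ℂ] H) (u v : ↥T0t.adjoint.domain) : ℂ :=
  pInner (u : H) (v : H) + pInner (T0t.adjoint u) (T0t.adjoint v)

/-- The (Hilbert) orthogonal complement of `W₀` in the graph space. -/
def W0perp (T0 T0t : H →ₗ.[ℂ] H) : Set ↥T0t.adjoint.domain :=
  {u | ∀ v : ↥T0t.adjoint.domain, (v : H) ∈ T0.closure.domain → gip T0t u v = 0}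

/-- `ker T₁` as a subset of the graph space. -/
def kerT1set (T0t : H →ₗ.[ℂ] H) : Set ↥T0t.adjoint.domain := {u | T0t.adjoint u = 0}

/-- `ker T̃₁` as a subset of the graph space. -/
def kerT1tset (T0 T0t : H →ₗ.[ℂ] H) (hW : T0t.adjoint.domain = T0.adjoint.domain) :
    Set ↥T0t.adjoint.domain :=
  {u | T0.adjoint ⟨(u : H), hW.le u.2⟩ = 0}

/-- An operator `M ∈ L(W;W')`, encoded through the pairing `m u v = ⟨Mu, v⟩_{W',W}`
(linear in `u`, antilinear in `v`, and bounded with respect to the graph norm). -/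
structure MOp (T0t : H →ₗ.[ℂ] H) where
  m : ↥T0t.adjoint.domain → ↥T0t.adjoint.domain → ℂ
  add_left : ∀ u v w, m (u + v) w = m u w + m v w
  smul_left : ∀ (c : ℂ) (u w), m (c • u) w = c * m u w
  add_right : ∀ u v w, m u (v + w) = m u v + m u w
  smul_right : ∀ (c : ℂ) (u w), m u (c • w) = starRingEnd ℂ c * m u w
  bounded : ∃ C, ∀ u v, ‖m u v‖ ≤ C * (gnorm T0t u * gnorm T0t v)

/-- The (M)-boundary conditions for a pairing `m u v = ⟨Mu, v⟩_{W',W}`: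
(M1) non-negativity and (M2) `W = ker (D − M) + ker (D + M)`. -/
def MBC (T0 T0t : H →ₗ.[ℂ] H) (hW : T0t.adjoint.domain = T0.adjoint.domain)
    (m : ↥T0t.adjoint.domain → ↥T0t.adjoint.domain → ℂ) : Prop :=
  (∀ u, 0 ≤ (m u u).re) ∧
  (∀ w : ↥T0t.adjoint.domain, ∃ a b : ↥T0t.adjoint.domain,
    (∀ v, bform T0 T0t hW a v = m a v) ∧ (∀ v, bform T0 T0t hW b v + m b v = 0) ∧ w = a + b)

/-- `ker (D − M)` for a pairing `m`. -/
def kerDsubM (T0 T0t : H →ₗ.[ℂ] H) (hW : T0t.adjoint.domain = T0.adjoint.domain)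
    (m : ↥T0t.adjoint.domain → ↥T0t.adjoint.domain → ℂ) : Set ↥T0t.adjoint.domain :=
  {u | ∀ v, bform T0 T0t hW u v = m u v}

/-- `ker (D + M)` for a pairing `m`. -/
def kerDaddM (T0 T0t : H →ₗ.[ℂ] H) (hW : T0t.adjoint.domain = T0.adjoint.domain)
    (m : ↥T0t.adjoint.domain → ↥T0t.adjoint.domain → ℂ) : Set ↥T0t.adjoint.domain :=
  {u | ∀ v, bform T0 T0t hW u v + m u v = 0}

/-! ### Auxiliary infrastructure for the proof -/

section FriedrichsAux

variable {T0 T0t : H →ₗ.[ℂ] H} {lam mu : ℝ}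

private lemma cre_le_norm (z : ℂ) : z.re ≤ ‖z‖ := by
  simpa using RCLike.re_le_norm z

private lemma dense_t (hF : IsDualPairT12 T0 T0t lam) : Dense (T0t.domain : Set H) :=
  hF.dom_eq ▸ hF.dense'

/-- Conjugated version of the symmetry condition (T1). -/
private lemma sym' (hF : IsDualPairT12 T0 T0t lam) (φ : T0.domain) (ψ : T0t.domain) :
    ⟪(T0 φ : H), (ψ : H)⟫_ℂ = ⟪(φ : H), T0t ψ⟫_ℂ := by
  have h := congrArg (starRingEnd ℂ) (hF.sym φ ψ)
  simpa [pInner, inner_conj_symm] using h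

/-- `T̃₁` as a linear map on the graph space. -/
private def T1tL (T0 T0t : H →ₗ.[ℂ] H) (hW : T0t.adjoint.domain = T0.adjoint.domain) :
    ↥T0t.adjoint.domain →ₗ[ℂ] H where
  toFun u := T0.adjoint ⟨(u : H), hW.le u.2⟩
  map_add' u v := by
    show T0.adjoint (⟨(u : H), hW.le u.2⟩ + ⟨(v : H), hW.le v.2⟩)
        = T0.adjoint ⟨(u : H), hW.le u.2⟩ + T0.adjoint ⟨(v : H), hW.le v.2⟩
    exact LinearPMap.map_add _ _ _
  map_smul' c u := by
    show T0.adjoint (c • ⟨(u : H), hW.le u.2⟩) = c • T0.adjoint ⟨(u : H), hW.le u.2⟩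
    exact LinearPMap.map_smul _ _ _

@[simp] private lemma T1tL_apply (hW : T0t.adjoint.domain = T0.adjoint.domain)
    (u : ↥T0t.adjoint.domain) :
    T1tL T0 T0t hW u = T0.adjoint ⟨(u : H), hW.le u.2⟩ := rfl

private lemma bform_eq (hW : T0t.adjoint.domain = T0.adjoint.domain)
    (u v : ↥T0t.adjoint.domain) :
    bform T0 T0t hW u v
      = ⟪(v : H), T0t.adjoint u⟫_ℂ - ⟪(T1tL T0 T0t hW v : H), (u : H)⟫_ℂ := rfl

private lemma cauchySeq_of_norm_le {f g : ℕ → H} {C : ℝ} (hC : 0 < C)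
    (h : ∀ n m, ‖g n - g m‖ ≤ C * ‖f n - f m‖) (hf : CauchySeq f) : CauchySeq g := by
  rw [Metric.cauchySeq_iff] at hf ⊢
  intro ε hε
  obtain ⟨N, hN⟩ := hf (ε / C) (div_pos hε hC)
  refine ⟨N, fun m hm n hn => ?_⟩
  have h1 := hN m hm n hn
  rw [dist_eq_norm] at h1 ⊢
  calc ‖g m - g n‖ ≤ C * ‖f m - f n‖ := h m n
    _ < C * (ε / C) := mul_lt_mul_of_pos_left h1 hC
    _ = ε := by field_simp

private lemma le_inv_mul {a b : ℝ} (hmu : 0 < mu) (h : mu * a ≤ b) : a ≤ mu⁻¹ * b :=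
  (le_inv_mul_iff₀ hmu).mpr h

/-- Key approximation lemma: every element of the graph space is approximated by elements
of the common domain, jointly with the action of `T₁ + T̃₁`. -/
private lemma seq_approx (hF : IsDualPairT12 T0 T0t lam)
    (hW : T0t.adjoint.domain = T0.adjoint.domain) (u : ↥T0t.adjoint.domain) :
    ∃ φ : ℕ → ↥T0.domain,
      Tendsto (fun n => ((φ n : H))) atTop (𝓝 (u : H)) ∧
      Tendsto (fun n => T0 (φ n) + T0t ⟨(φ n : H), hF.dom_eq.le (φ n).2⟩) atTop
        (𝓝 (T0t.adjoint u + T1tL T0 T0t hW u)) := by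
  have hd := hF.dense'
  have hdt : Dense (T0t.domain : Set H) := dense_t hF
  obtain ⟨s, hs, hslim⟩ := mem_closure_iff_seq_limit.mp (hd (u : H))
  set φ : ℕ → ↥T0.domain := fun n => ⟨s n, hs n⟩ with hφ
  set g : ℕ → H := fun n => T0 (φ n) + T0t ⟨(φ n : H), hF.dom_eq.le (φ n).2⟩ with hg
  refine ⟨φ, hslim, ?_⟩
  have hkey : ∀ n m : ℕ, ‖g n - g m‖ ≤ 2 * lam * ‖s n - s m‖ := by
    intro n m
    have hsme : (⟨s n - s m, sub_mem (hs n) (hs m)⟩ : T0.domain) = φ n - φ m := rfl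
    have hsmet : (⟨s n - s m, hF.dom_eq.le (sub_mem (hs n) (hs m))⟩ : T0t.domain)
        = ⟨(φ n : H), hF.dom_eq.le (φ n).2⟩ - ⟨(φ m : H), hF.dom_eq.le (φ m).2⟩ := rfl
    have hb := hF.bound (s n - s m) (sub_mem (hs n) (hs m))
    rw [hsme, hsmet, LinearPMap.map_sub, LinearPMap.map_sub] at hb
    have hgeq : g n - g m = (T0 (φ n) - T0 (φ m)) + (T0t ⟨(φ n : H), hF.dom_eq.le (φ n).2⟩
        - T0t ⟨(φ m : H), hF.dom_eq.le (φ m).2⟩) := by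
      simp only [hg]
      abel
    rw [hgeq]
    exact hb
  have hgc : CauchySeq g :=
    cauchySeq_of_norm_le (by have := hF.lam_pos; positivity) hkey hslim.cauchySeq
  obtain ⟨L, hL⟩ := cauchySeq_tendsto_of_complete hgc
  have hLeq : L = T0t.adjoint u + T1tL T0 T0t hW u := by
    refine hdt.eq_of_inner_left ℂ (fun x hx => ?_)
    obtain ⟨χ, rfl⟩ : ∃ χ : T0t.domain, (χ : H) = x := ⟨⟨x, hx⟩, rfl⟩
    have h1 : Tendsto (fun n => ⟪g n, (χ : H)⟫_ℂ) atTop (𝓝 ⟪L, (χ : H)⟫_ℂ) :=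
      hL.inner tendsto_const_nhds
    set χ0 : T0.domain := ⟨(χ : H), hF.dom_eq.ge χ.2⟩ with hχ0
    have h2 : ∀ n, ⟪g n, (χ : H)⟫_ℂ = ⟪s n, T0t χ + T0 χ0⟫_ℂ := by
      intro n
      have e1 : ⟪(T0 (φ n) : H), (χ : H)⟫_ℂ = ⟪s n, T0t χ⟫_ℂ := sym' hF (φ n) χ
      have e2 : ⟪(T0t ⟨(φ n : H), hF.dom_eq.le (φ n).2⟩ : H), (χ : H)⟫_ℂ
          = ⟪s n, T0 χ0⟫_ℂ := by
        have := hF.sym χ0 ⟨(φ n : H), hF.dom_eq.le (φ n).2⟩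
        simpa [pInner] using this.symm
      rw [hg]
      simp only [inner_add_left, inner_add_right, e1, e2]
    have h3 : Tendsto (fun n => ⟪(s n : H), T0t χ + T0 χ0⟫_ℂ) atTop
        (𝓝 ⟪(u : H), T0t χ + T0 χ0⟫_ℂ) := hslim.inner tendsto_const_nhds
    have h4 : ⟪L, (χ : H)⟫_ℂ = ⟪(u : H), T0t χ + T0 χ0⟫_ℂ := by
      refine tendsto_nhds_unique ?_ h3
      simpa only [h2] using h1
    rw [h4, inner_add_left, inner_add_right]
    congr 1
    · exact ((T0t.adjoint_isFormalAdjoint hdt) u χ).symm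
    · exact ((T0.adjoint_isFormalAdjoint hd) ⟨(u : H), hW.le u.2⟩ χ0).symm
  rwa [hLeq] at hL

/-- Symmetry of the extension of `T₀ + T̃₀` on the whole graph space. -/
private lemma S_symm (hF : IsDualPairT12 T0 T0t lam)
    (hW : T0t.adjoint.domain = T0.adjoint.domain) (u v : ↥T0t.adjoint.domain) :
    ⟪(T0t.adjoint u + T1tL T0 T0t hW u : H), (v : H)⟫_ℂ
      = ⟪(u : H), T0t.adjoint v + T1tL T0 T0t hW v⟫_ℂ := by
  have hd := hF.dense'
  have hdt : Dense (T0t.domain : Set H) := dense_t hF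
  obtain ⟨φ, hφ, hg⟩ := seq_approx hF hW u
  have h1 : Tendsto (fun n => ⟪(T0 (φ n) + T0t ⟨(φ n : H), hF.dom_eq.le (φ n).2⟩ : H),
      (v : H)⟫_ℂ) atTop (𝓝 ⟪(T0t.adjoint u + T1tL T0 T0t hW u : H), (v : H)⟫_ℂ) :=
    hg.inner tendsto_const_nhds
  have h2 : ∀ n, ⟪(T0 (φ n) + T0t ⟨(φ n : H), hF.dom_eq.le (φ n).2⟩ : H), (v : H)⟫_ℂ
      = ⟪(φ n : H), T0t.adjoint v + T1tL T0 T0t hW v⟫_ℂ := by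
    intro n
    have e1 : ⟪(T0 (φ n) : H), (v : H)⟫_ℂ = ⟪(φ n : H), T1tL T0 T0t hW v⟫_ℂ := by
      have := (T0.adjoint_isFormalAdjoint hd) ⟨(v : H), hW.le v.2⟩ (φ n)
      have h' := congrArg (starRingEnd ℂ) this
      simpa [inner_conj_symm] using h'.symm
    have e2 : ⟪(T0t ⟨(φ n : H), hF.dom_eq.le (φ n).2⟩ : H), (v : H)⟫_ℂ
        = ⟪(φ n : H), T0t.adjoint v⟫_ℂ := by
      have := (T0t.adjoint_isFormalAdjoint hdt) v ⟨(φ n : H), hF.dom_eq.le (φ n).2⟩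
      have h' := congrArg (starRingEnd ℂ) this
      simpa [inner_conj_symm] using h'.symm
    simp only [inner_add_left, inner_add_right, e1, e2]
    ring
  have h3 : Tendsto (fun n => ⟪(φ n : H), T0t.adjoint v + T1tL T0 T0t hW v⟫_ℂ) atTop
      (𝓝 ⟪(u : H), T0t.adjoint v + T1tL T0 T0t hW v⟫_ℂ) := hφ.inner tendsto_const_nhds
  refine tendsto_nhds_unique ?_ h3
  simpa only [h2] using h1

/-- Boundedness of the extension of `T₀ + T̃₀`. -/
private lemma S_bound (hF : IsDualPairT12 T0 T0t lam)
    (hW : T0t.adjoint.domain = T0.adjoint.domain) (u : ↥T0t.adjoint.domain) :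
    ‖T0t.adjoint u + T1tL T0 T0t hW u‖ ≤ 2 * lam * ‖(u : H)‖ := by
  obtain ⟨φ, hφ, hg⟩ := seq_approx hF hW u
  refine le_of_tendsto_of_tendsto' hg.norm ((hφ.norm).const_mul (2 * lam)) fun n => ?_
  exact hF.bound (φ n) (φ n).2

/-- Coercivity of the extension of `T₀ + T̃₀`. -/
private lemma S_coercive (hF : IsFriedrichsPair T0 T0t lam mu)
    (hW : T0t.adjoint.domain = T0.adjoint.domain) (u : ↥T0t.adjoint.domain) :
    2 * mu * ‖(u : H)‖ ^ 2 ≤ (⟪(T0t.adjoint u + T1tL T0 T0t hW u : H), (u : H)⟫_ℂ).re := by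
  obtain ⟨φ, hφ, hg⟩ := seq_approx hF.toIsDualPairT12 hW u
  have h1 : Tendsto (fun n => (⟪(T0 (φ n) + T0t ⟨(φ n : H), hF.dom_eq.le (φ n).2⟩ : H),
      (φ n : H)⟫_ℂ).re) atTop (𝓝 (⟪(T0t.adjoint u + T1tL T0 T0t hW u : H), (u : H)⟫_ℂ).re) :=
    (Complex.continuous_re.tendsto _).comp (hg.inner hφ)
  have h2 : Tendsto (fun n => 2 * mu * ‖(φ n : H)‖ ^ 2) atTop (𝓝 (2 * mu * ‖(u : H)‖ ^ 2)) :=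
    ((hφ.norm).pow 2).const_mul (2 * mu)
  refine le_of_tendsto_of_tendsto' h2 h1 fun n => ?_
  have := hF.coercive (φ n) (φ n).2
  have hre : (pInner (T0 ⟨(φ n : H), (φ n).2⟩ + T0t ⟨(φ n : H), hF.dom_eq.le (φ n).2⟩)
      ((φ n : H))).re
      = (⟪(T0 (φ n) + T0t ⟨(φ n : H), hF.dom_eq.le (φ n).2⟩ : H), (φ n : H)⟫_ℂ).re := by
    rw [pInner, ← inner_conj_symm]
    exact Complex.conj_re _
  rw [hre] at this
  exact this

end FriedrichsAux


section FriedrichsAux2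

variable {T0 T0t : H →ₗ.[ℂ] H} {lam mu : ℝ}

/-- Elements of the common domain `D` belong to the graph space `W`. -/
private lemma mem_W_of_D (hF : IsDualPairT12 T0 T0t lam) (χ : T0.domain) :
    (χ : H) ∈ T0t.adjoint.domain :=
  LinearPMap.mem_adjoint_domain_of_exists _ ⟨T0 χ, fun ψ => sym' hF χ ψ⟩

private lemma T1_of_D (hF : IsDualPairT12 T0 T0t lam) (χ : T0.domain)
    (h : (χ : H) ∈ T0t.adjoint.domain) :
    T0t.adjoint ⟨(χ : H), h⟩ = T0 χ :=
  LinearPMap.adjoint_apply_eq (dense_t hF) ⟨(χ : H), h⟩ (fun x => sym' hF χ x)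

private lemma T1t_of_D (hF : IsDualPairT12 T0 T0t lam) (χ : T0.domain)
    (h : (χ : H) ∈ T0.adjoint.domain) :
    T0.adjoint ⟨(χ : H), h⟩ = T0t ⟨(χ : H), hF.dom_eq.le χ.2⟩ :=
  LinearPMap.adjoint_apply_eq hF.dense' ⟨(χ : H), h⟩
    (fun x => by simpa [pInner] using (hF.sym x ⟨(χ : H), hF.dom_eq.le χ.2⟩).symm)

/-- The boundary form vanishes whenever the first entry lies in `D`. -/
private lemma bform_D_left (hF : IsDualPairT12 T0 T0t lam)
    (hW : T0t.adjoint.domain = T0.adjoint.domain) (χ : T0.domain)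
    (h : (χ : H) ∈ T0t.adjoint.domain) (v : ↥T0t.adjoint.domain) :
    bform T0 T0t hW ⟨(χ : H), h⟩ v = 0 := by
  rw [bform_eq, T1_of_D hF χ h]
  have := (T0.adjoint_isFormalAdjoint hF.dense') ⟨(v : H), hW.le v.2⟩ χ
  rw [T1tL_apply]
  rw [this]
  exact sub_self _

/-- The boundary form is Hermitian. -/
private lemma bform_conj (hF : IsDualPairT12 T0 T0t lam)
    (hW : T0t.adjoint.domain = T0.adjoint.domain) (u v : ↥T0t.adjoint.domain) :
    bform T0 T0t hW u v = starRingEnd ℂ (bform T0 T0t hW v u) := by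
  have hs := congrArg (starRingEnd ℂ) (S_symm hF hW u v)
  rw [inner_conj_symm, inner_conj_symm] at hs
  rw [bform_eq, bform_eq, _root_.map_sub, inner_conj_symm, inner_conj_symm]
  rw [inner_add_right, inner_add_left] at hs
  linear_combination hs

/-- Coercivity estimate for `T₁` on non-negative vectors. -/
private lemma norm_T1_ge (hF : IsFriedrichsPair T0 T0t lam mu)
    (hW : T0t.adjoint.domain = T0.adjoint.domain) (u : ↥T0t.adjoint.domain)
    (h : 0 ≤ (bform T0 T0t hW u u).re) :
    mu * ‖(u : H)‖ ≤ ‖T0t.adjoint u‖ := by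
  have hc := S_coercive hF hW u
  rw [inner_add_left, Complex.add_re] at hc
  have hb : (bform T0 T0t hW u u).re
      = (⟪(T0t.adjoint u : H), (u : H)⟫_ℂ).re - (⟪(T1tL T0 T0t hW u : H), (u : H)⟫_ℂ).re := by
    rw [bform_eq, Complex.sub_re]
    congr 1
    rw [← inner_conj_symm]
    exact Complex.conj_re _
  have h3 : (⟪(T0t.adjoint u : H), (u : H)⟫_ℂ).re ≤ ‖T0t.adjoint u‖ * ‖(u : H)‖ :=
    (cre_le_norm _).trans (norm_inner_le_norm _ _)
  rcases eq_or_lt_of_le (norm_nonneg ((u : H))) with h0 | h0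
  · rw [← h0, mul_zero]; exact norm_nonneg _
  · have h4 : mu * ‖(u : H)‖ * ‖(u : H)‖ ≤ ‖T0t.adjoint u‖ * ‖(u : H)‖ := by nlinarith
    exact le_of_mul_le_mul_right h4 h0

/-- Coercivity estimate for `T̃₁` on non-positive vectors. -/
private lemma norm_T1t_ge (hF : IsFriedrichsPair T0 T0t lam mu)
    (hW : T0t.adjoint.domain = T0.adjoint.domain) (u : ↥T0t.adjoint.domain)
    (h : (bform T0 T0t hW u u).re ≤ 0) :
    mu * ‖(u : H)‖ ≤ ‖T1tL T0 T0t hW u‖ := by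
  have hc := S_coercive hF hW u
  rw [inner_add_left, Complex.add_re] at hc
  have hb : (bform T0 T0t hW u u).re
      = (⟪(T0t.adjoint u : H), (u : H)⟫_ℂ).re - (⟪(T1tL T0 T0t hW u : H), (u : H)⟫_ℂ).re := by
    rw [bform_eq, Complex.sub_re]
    congr 1
    rw [← inner_conj_symm]
    exact Complex.conj_re _
  have h3 : (⟪(T1tL T0 T0t hW u : H), (u : H)⟫_ℂ).re ≤ ‖T1tL T0 T0t hW u‖ * ‖(u : H)‖ :=
    (cre_le_norm _).trans (norm_inner_le_norm _ _)
  rcases eq_or_lt_of_le (norm_nonneg ((u : H))) with h0 | h0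
  · rw [← h0, mul_zero]; exact norm_nonneg _
  · have h4 : mu * ‖(u : H)‖ * ‖(u : H)‖ ≤ ‖T1tL T0 T0t hW u‖ * ‖(u : H)‖ := by nlinarith
    exact le_of_mul_le_mul_right h4 h0

private lemma bform_add_left (hW : T0t.adjoint.domain = T0.adjoint.domain)
    (u w v : ↥T0t.adjoint.domain) :
    bform T0 T0t hW (u + w) v = bform T0 T0t hW u v + bform T0 T0t hW w v := by
  simp only [bform_eq, LinearPMap.map_add, Submodule.coe_add, inner_add_right]
  ring

private lemma bform_smul_left (hW : T0t.adjoint.domain = T0.adjoint.domain)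
    (c : ℂ) (u v : ↥T0t.adjoint.domain) :
    bform T0 T0t hW (c • u) v = c * bform T0 T0t hW u v := by
  simp only [bform_eq, LinearPMap.map_smul, Submodule.coe_smul, inner_smul_right]
  ring

private lemma bform_zero_left (hW : T0t.adjoint.domain = T0.adjoint.domain)
    (v : ↥T0t.adjoint.domain) : bform T0 T0t hW 0 v = 0 := by
  have := bform_smul_left hW 0 0 v
  simpa using this

private lemma bform_sub_left (hW : T0t.adjoint.domain = T0.adjoint.domain)
    (u w v : ↥T0t.adjoint.domain) :
    bform T0 T0t hW (u - w) v = bform T0 T0t hW u v - bform T0 T0t hW w v := by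
  have h1 := bform_add_left hW (u - w) w v
  rw [sub_add_cancel] at h1
  linear_combination -h1

/-- `X^[⊥]` as a submodule of the graph space. -/
private def iorthSub (T0 T0t : H →ₗ.[ℂ] H) (hW : T0t.adjoint.domain = T0.adjoint.domain)
    (X : Set ↥T0t.adjoint.domain) : Submodule ℂ ↥T0t.adjoint.domain where
  carrier := iorth T0 T0t hW X
  zero_mem' := fun v _ => bform_zero_left hW v
  add_mem' := fun hu hw v hv => by
    rw [bform_add_left hW, hu v hv, hw v hv, add_zero]
  smul_mem' := fun c u hu v hv => by
    rw [bform_smul_left hW, hu v hv, mul_zero]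

@[simp] private lemma iorthSub_coe (hW : T0t.adjoint.domain = T0.adjoint.domain)
    (X : Set ↥T0t.adjoint.domain) :
    (iorthSub T0 T0t hW X : Set ↥T0t.adjoint.domain) = iorth T0 T0t hW X := rfl

/-- Closedness of the graph: limits in the graph sense stay in `W`. -/
private lemma graph_limit (hdt : Dense (T0t.domain : Set H))
    {un : ℕ → ↥T0t.adjoint.domain} {x f : H}
    (hx : Tendsto (fun n => ((un n : H))) atTop (𝓝 x))
    (hf : Tendsto (fun n => (T0t.adjoint (un n) : H)) atTop (𝓝 f)) :
    ∃ hm : x ∈ T0t.adjoint.domain, T0t.adjoint ⟨x, hm⟩ = f := by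
  have hkey : ∀ ψ : T0t.domain, ⟪f, (ψ : H)⟫_ℂ = ⟪x, T0t ψ⟫_ℂ := by
    intro ψ
    have h1 : Tendsto (fun n => ⟪(T0t.adjoint (un n) : H), (ψ : H)⟫_ℂ) atTop
        (𝓝 ⟪f, (ψ : H)⟫_ℂ) := hf.inner tendsto_const_nhds
    have h2 : ∀ n, ⟪(T0t.adjoint (un n) : H), (ψ : H)⟫_ℂ = ⟪((un n : H)), T0t ψ⟫_ℂ :=
      fun n => (T0t.adjoint_isFormalAdjoint hdt) (un n) ψ
    have h3 : Tendsto (fun n => ⟪((un n : H)), T0t ψ⟫_ℂ) atTop (𝓝 ⟪x, T0t ψ⟫_ℂ) :=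
      hx.inner tendsto_const_nhds
    refine tendsto_nhds_unique ?_ h3
    simpa only [h2] using h1
  have hm : x ∈ T0t.adjoint.domain :=
    LinearPMap.mem_adjoint_domain_of_exists _ ⟨f, hkey⟩
  exact ⟨hm, LinearPMap.adjoint_apply_eq hdt ⟨x, hm⟩ hkey⟩

end FriedrichsAux2


section FriedrichsAux3

variable {T0 T0t : H →ₗ.[ℂ] H} {lam mu : ℝ}

/-- Under (V)-boundary conditions `T₁|_V : V → H` is surjective. -/
private lemma surj_V (hF : IsFriedrichsPair T0 T0t lam mu)
    (hW : T0t.adjoint.domain = T0.adjoint.domain)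
    (V : Submodule ℂ ↥T0t.adjoint.domain)
    (hV : VBC T0 T0t hW (V : Set ↥T0t.adjoint.domain)) (f : H) :
    ∃ u, u ∈ V ∧ T0t.adjoint u = f := by
  have hd := hF.dense'
  have hdt : Dense (T0t.domain : Set H) := dense_t hF.toIsDualPairT12
  have hmu := hF.mu_pos
  have hcoV : ∀ u : ↥T0t.adjoint.domain, u ∈ V → mu * ‖(u : H)‖ ≤ ‖T0t.adjoint u‖ :=
    fun u hu => norm_T1_ge hF hW u (hV.1 hu)
  set R : Submodule ℂ H := V.map T0t.adjoint.toFun with hR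
  have hmemR : ∀ u : ↥T0t.adjoint.domain, u ∈ V → (T0t.adjoint u : H) ∈ R := fun u hu =>
    Submodule.mem_map.mpr ⟨u, hu, rfl⟩
  have hclosed : IsClosed (R : Set H) := by
    apply IsSeqClosed.isClosed
    intro g p hg hgp
    choose uu h1 h2' using fun n => Submodule.mem_map.mp (hg n)
    have h2 : ∀ k, (T0t.adjoint (uu k) : H) = g k := h2'
    have hCu : CauchySeq (fun n => ((uu n : H))) := by
      refine cauchySeq_of_norm_le (inv_pos.mpr hmu) (fun n m => ?_) hgp.cauchySeq
      refine le_inv_mul hmu ?_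
      have hsub := hcoV _ (V.sub_mem (h1 n) (h1 m))
      rw [LinearPMap.map_sub] at hsub
      rw [h2 n, h2 m] at hsub
      exact hsub
    obtain ⟨x, hx⟩ := cauchySeq_tendsto_of_complete hCu
    have hTf : Tendsto (fun n => (T0t.adjoint (uu n) : H)) atTop (𝓝 p) := by
      simpa only [h2] using hgp
    obtain ⟨hm, hTx⟩ := graph_limit hdt hx hTf
    have hVmem : (⟨x, hm⟩ : ↥T0t.adjoint.domain) ∈ V := by
      have hset : (⟨x, hm⟩ : ↥T0t.adjoint.domain)
          ∈ iorth T0 T0t hW (iorth T0 T0t hW (V : Set ↥T0t.adjoint.domain)) := by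
        intro v hv
        have hb0 : ∀ n, bform T0 T0t hW (uu n) v = 0 := by
          intro n
          have hmem' : (uu n) ∈ iorth T0 T0t hW (iorth T0 T0t hW (V : Set _)) := by
            have := h1 n
            rw [← SetLike.mem_coe, hV.2.2] at this
            exact this
          exact hmem' v hv
        have hlim : Tendsto (fun n => bform T0 T0t hW (uu n) v) atTop
            (𝓝 (⟪(v : H), p⟫_ℂ - ⟪(T1tL T0 T0t hW v : H), x⟫_ℂ)) := by
          simp only [bform_eq]
          exact (tendsto_const_nhds.inner hTf).sub (tendsto_const_nhds.inner hx)
        have hval : bform T0 T0t hW ⟨x, hm⟩ v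
            = ⟪(v : H), p⟫_ℂ - ⟪(T1tL T0 T0t hW v : H), x⟫_ℂ := by
          rw [bform_eq, hTx]
        have h0 : (fun n => bform T0 T0t hW (uu n) v) = fun _ => (0 : ℂ) := funext hb0
        rw [h0] at hlim
        have hz := tendsto_nhds_unique hlim tendsto_const_nhds
        rw [hval, ← hz]
      rw [← SetLike.mem_coe, hV.2.2]
      exact hset
    have : (T0t.adjoint (⟨x, hm⟩ : ↥T0t.adjoint.domain) : H) ∈ R := hmemR _ hVmem
    rwa [hTx] at this
  have horth : ∀ h : H, h ∈ Rᗮ → h = 0 := by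
    intro h hh
    have hph : ∀ u : ↥T0t.adjoint.domain, u ∈ V → ⟪(T0t.adjoint u : H), h⟫_ℂ = 0 := fun u hu =>
      (Submodule.mem_orthogonal R h).mp hh _ (hmemR u hu)
    have hDV : ∀ χ : T0.domain,
        (⟨(χ : H), mem_W_of_D hF.toIsDualPairT12 χ⟩ : ↥T0t.adjoint.domain) ∈ V := by
      intro χ
      rw [← SetLike.mem_coe, hV.2.2]
      intro v hv
      exact bform_D_left hF.toIsDualPairT12 hW χ _ v
    have hT0h' : ∀ χ : T0.domain, ⟪h, (T0 χ : H)⟫_ℂ = 0 := by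
      intro χ
      have h5 := hph _ (hDV χ)
      rw [T1_of_D hF.toIsDualPairT12 χ _] at h5
      rw [← inner_conj_symm, h5, _root_.map_zero]
    have hmem : h ∈ T0.adjoint.domain :=
      LinearPMap.mem_adjoint_domain_of_exists _ ⟨0, fun x => by rw [inner_zero_left, hT0h' x]⟩
    have hadj0 : T0.adjoint ⟨h, hmem⟩ = 0 :=
      LinearPMap.adjoint_apply_eq hd ⟨h, hmem⟩ (fun x => by rw [inner_zero_left, hT0h' x])
    have hT1t_hu : T1tL T0 T0t hW ⟨h, hW.ge hmem⟩ = 0 := hadj0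
    have hiorth : (⟨h, hW.ge hmem⟩ : ↥T0t.adjoint.domain)
        ∈ iorth T0 T0t hW (V : Set ↥T0t.adjoint.domain) := by
      intro v hv
      rw [bform_conj hF.toIsDualPairT12 hW]
      have hzero : bform T0 T0t hW v ⟨h, hW.ge hmem⟩ = 0 := by
        rw [bform_eq]
        rw [show (T1tL T0 T0t hW ⟨h, hW.ge hmem⟩ : H) = 0 from hT1t_hu, inner_zero_left,
          sub_zero]
        rw [show ((⟨h, hW.ge hmem⟩ : ↥T0t.adjoint.domain) : H) = h from rfl]
        rw [← inner_conj_symm, hph v hv, _root_.map_zero]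
      rw [hzero, _root_.map_zero]
    have hfin := norm_T1t_ge hF hW ⟨h, hW.ge hmem⟩ (hV.2.1 hiorth)
    rw [hT1t_hu, norm_zero] at hfin
    have hn : ‖h‖ = 0 := le_antisymm (by nlinarith) (norm_nonneg h)
    exact norm_eq_zero.mp hn
  have horthbot : Rᗮ = ⊥ := by
    rw [Submodule.eq_bot_iff]; exact horth
  have hdense : R.topologicalClosure = ⊤ := by
    rw [← Submodule.orthogonal_orthogonal_eq_closure, horthbot, Submodule.bot_orthogonal_eq_top]
  have hfR : f ∈ R := by
    have hc1 : f ∈ R.topologicalClosure := by rw [hdense]; trivial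
    have hc2 : f ∈ closure (R : Set H) := by
      rw [← Submodule.topologicalClosure_coe]
      exact hc1
    rwa [hclosed.closure_eq] at hc2
  obtain ⟨u, hu, hTu⟩ := Submodule.mem_map.mp hfR
  exact ⟨u, hu, hTu⟩

/-- Under (V)-boundary conditions `T̃₁|_{V^[⊥]} : V^[⊥] → H` is surjective. -/
private lemma surj_Vt (hF : IsFriedrichsPair T0 T0t lam mu)
    (hW : T0t.adjoint.domain = T0.adjoint.domain)
    (V : Submodule ℂ ↥T0t.adjoint.domain)
    (hV : VBC T0 T0t hW (V : Set ↥T0t.adjoint.domain)) (f : H) :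
    ∃ u, u ∈ iorth T0 T0t hW (V : Set ↥T0t.adjoint.domain) ∧ T1tL T0 T0t hW u = f := by
  have hd := hF.dense'
  have hdt : Dense (T0t.domain : Set H) := dense_t hF.toIsDualPairT12
  have hmu := hF.mu_pos
  set Vt : Submodule ℂ ↥T0t.adjoint.domain := iorthSub T0 T0t hW (V : Set _) with hVtdef
  have hcoVt : ∀ u : ↥T0t.adjoint.domain, u ∈ Vt → mu * ‖(u : H)‖ ≤ ‖T1tL T0 T0t hW u‖ :=
    fun u hu => norm_T1t_ge hF hW u (hV.2.1 hu)
  set R : Submodule ℂ H := Vt.map (T1tL T0 T0t hW) with hR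
  have hmemR : ∀ u : ↥T0t.adjoint.domain, u ∈ Vt → (T1tL T0 T0t hW u : H) ∈ R := fun u hu =>
    Submodule.mem_map.mpr ⟨u, hu, rfl⟩
  have hclosed : IsClosed (R : Set H) := by
    apply IsSeqClosed.isClosed
    intro g p hg hgp
    choose uu h1 h2 using fun n => Submodule.mem_map.mp (hg n)
    have hCu : CauchySeq (fun n => ((uu n : H))) := by
      refine cauchySeq_of_norm_le (inv_pos.mpr hmu) (fun n m => ?_) hgp.cauchySeq
      refine le_inv_mul hmu ?_
      have hsub := hcoVt _ (Vt.sub_mem (h1 n) (h1 m))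
      rw [_root_.map_sub] at hsub
      rw [h2 n, h2 m] at hsub
      exact hsub
    have hg' : Tendsto (fun n => (T1tL T0 T0t hW (uu n) : H)) atTop (𝓝 p) := by
      simpa only [h2] using hgp
    have hCS : CauchySeq (fun n => (T0t.adjoint (uu n) : H)) := by
      have hSs : CauchySeq
          (fun n => (T0t.adjoint (uu n) + T1tL T0 T0t hW (uu n) : H)) := by
        refine cauchySeq_of_norm_le (C := 2 * lam)
          (by have := hF.lam_pos; positivity) (fun n m => ?_) hCu
        have hb := S_bound hF.toIsDualPairT12 hW (uu n - uu m)
        rw [LinearPMap.map_sub, _root_.map_sub] at hb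
        have he : (T0t.adjoint (uu n) + T1tL T0 T0t hW (uu n))
              - (T0t.adjoint (uu m) + T1tL T0 T0t hW (uu m))
            = (T0t.adjoint (uu n) - T0t.adjoint (uu m))
              + (T1tL T0 T0t hW (uu n) - T1tL T0 T0t hW (uu m)) := by abel
        rw [he]
        exact hb
      have he2 : (fun n => (T0t.adjoint (uu n) : H))
          = fun n => ((T0t.adjoint (uu n) + T1tL T0 T0t hW (uu n)) -
              T1tL T0 T0t hW (uu n)) := by
        funext n; abel
      obtain ⟨w, hw⟩ := cauchySeq_tendsto_of_complete hSs
      have hTend : Tendsto (fun n => (T0t.adjoint (uu n) : H)) atTop (𝓝 (w - p)) := by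
        rw [he2]
        exact hw.sub hg'
      exact hTend.cauchySeq
    obtain ⟨q, hq⟩ := cauchySeq_tendsto_of_complete hCS
    obtain ⟨x, hx⟩ := cauchySeq_tendsto_of_complete hCu
    obtain ⟨hm, hTx⟩ := graph_limit hdt hx hq
    have hSlim : Tendsto (fun n => (T0t.adjoint (uu n) + T1tL T0 T0t hW (uu n) : H)) atTop
        (𝓝 (T0t.adjoint (⟨x, hm⟩ : ↥T0t.adjoint.domain)
          + T1tL T0 T0t hW ⟨x, hm⟩)) := by
      rw [tendsto_iff_norm_sub_tendsto_zero]
      have hx0 : Tendsto (fun n => ‖(uu n : H) - x‖) atTop (𝓝 0) :=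
        tendsto_iff_norm_sub_tendsto_zero.mp hx
      refine squeeze_zero (fun n => norm_nonneg _) (fun n => ?_)
        (by simpa using hx0.const_mul (2 * lam))
      have hb := S_bound hF.toIsDualPairT12 hW (uu n - ⟨x, hm⟩)
      have hcoe : ((uu n - (⟨x, hm⟩ : ↥T0t.adjoint.domain) : ↥T0t.adjoint.domain) : H)
          = (uu n : H) - x := rfl
      rw [hcoe] at hb
      rw [LinearPMap.map_sub, _root_.map_sub] at hb
      have he : (T0t.adjoint (uu n) - T0t.adjoint (⟨x, hm⟩ : ↥T0t.adjoint.domain))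
            + (T1tL T0 T0t hW (uu n) - T1tL T0 T0t hW ⟨x, hm⟩)
          = (T0t.adjoint (uu n) + T1tL T0 T0t hW (uu n))
            - (T0t.adjoint (⟨x, hm⟩ : ↥T0t.adjoint.domain)
              + T1tL T0 T0t hW ⟨x, hm⟩) := by abel
      rw [he] at hb
      exact hb
    have hTt : T1tL T0 T0t hW ⟨x, hm⟩ = p := by
      have h5 : Tendsto (fun n => (T0t.adjoint (uu n) + T1tL T0 T0t hW (uu n) : H)) atTop
          (𝓝 (q + p)) := hq.add hg'
      have h6 := tendsto_nhds_unique hSlim h5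
      rw [hTx] at h6
      exact add_left_cancel h6
    have hVtmem : (⟨x, hm⟩ : ↥T0t.adjoint.domain) ∈ Vt := by
      show (⟨x, hm⟩ : ↥T0t.adjoint.domain) ∈ iorth T0 T0t hW (V : Set _)
      intro v hv
      have hb0 : ∀ n, bform T0 T0t hW (uu n) v = 0 := fun n => (h1 n) v hv
      have hlim : Tendsto (fun n => bform T0 T0t hW (uu n) v) atTop
          (𝓝 (⟪(v : H), q⟫_ℂ - ⟪(T1tL T0 T0t hW v : H), x⟫_ℂ)) := by
        simp only [bform_eq]
        exact (tendsto_const_nhds.inner hq).sub (tendsto_const_nhds.inner hx)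
      have hval : bform T0 T0t hW ⟨x, hm⟩ v
          = ⟪(v : H), q⟫_ℂ - ⟪(T1tL T0 T0t hW v : H), x⟫_ℂ := by
        rw [bform_eq, hTx]
      have h0 : (fun n => bform T0 T0t hW (uu n) v) = fun _ => (0 : ℂ) := funext hb0
      rw [h0] at hlim
      have hz := tendsto_nhds_unique hlim tendsto_const_nhds
      rw [hval, ← hz]
    have : (T1tL T0 T0t hW (⟨x, hm⟩ : ↥T0t.adjoint.domain) : H) ∈ R := hmemR _ hVtmem
    rwa [hTt] at this
  have horth : ∀ h : H, h ∈ Rᗮ → h = 0 := by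
    intro h hh
    have hph : ∀ u : ↥T0t.adjoint.domain, u ∈ Vt → ⟪(T1tL T0 T0t hW u : H), h⟫_ℂ = 0 :=
      fun u hu => (Submodule.mem_orthogonal R h).mp hh _ (hmemR u hu)
    have hDVt : ∀ χ : T0.domain,
        (⟨(χ : H), mem_W_of_D hF.toIsDualPairT12 χ⟩ : ↥T0t.adjoint.domain) ∈ Vt := by
      intro χ
      show _ ∈ iorth T0 T0t hW (V : Set _)
      intro v hv
      exact bform_D_left hF.toIsDualPairT12 hW χ _ v
    have hT0th' : ∀ ψ : T0t.domain, ⟪h, (T0t ψ : H)⟫_ℂ = 0 := by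
      intro ψ
      have h5 := hph _ (hDVt ⟨(ψ : H), hF.dom_eq.ge ψ.2⟩)
      rw [T1tL_apply, T1t_of_D hF.toIsDualPairT12 ⟨(ψ : H), hF.dom_eq.ge ψ.2⟩ _] at h5
      have h6 : ⟪(T0t ψ : H), h⟫_ℂ = 0 := h5
      rw [← inner_conj_symm, h6, _root_.map_zero]
    have hmem : h ∈ T0t.adjoint.domain :=
      LinearPMap.mem_adjoint_domain_of_exists _ ⟨0, fun x => by rw [inner_zero_left, hT0th' x]⟩
    have hadj0 : T0t.adjoint (⟨h, hmem⟩ : ↥T0t.adjoint.domain) = 0 :=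
      LinearPMap.adjoint_apply_eq hdt ⟨h, hmem⟩ (fun x => by rw [inner_zero_left, hT0th' x])
    have hVmem : (⟨h, hmem⟩ : ↥T0t.adjoint.domain) ∈ (V : Set ↥T0t.adjoint.domain) := by
      rw [hV.2.2]
      intro v hv
      rw [bform_eq, hadj0, inner_zero_right, zero_sub, neg_eq_zero]
      exact hph v hv
    have hfin := norm_T1_ge hF hW ⟨h, hmem⟩ (hV.1 hVmem)
    rw [hadj0, norm_zero] at hfin
    have hn : ‖h‖ = 0 := le_antisymm (by nlinarith) (norm_nonneg h)
    exact norm_eq_zero.mp hn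
  have horthbot : Rᗮ = ⊥ := by
    rw [Submodule.eq_bot_iff]; exact horth
  have hdense : R.topologicalClosure = ⊤ := by
    rw [← Submodule.orthogonal_orthogonal_eq_closure, horthbot, Submodule.bot_orthogonal_eq_top]
  have hfR : f ∈ R := by
    have hc1 : f ∈ R.topologicalClosure := by rw [hdense]; trivial
    have hc2 : f ∈ closure (R : Set H) := by
      rw [← Submodule.topologicalClosure_coe]
      exact hc1
    rwa [hclosed.closure_eq] at hc2
  obtain ⟨u, hu, hTu⟩ := Submodule.mem_map.mp hfR
  exact ⟨u, hu, hTu⟩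

end FriedrichsAux3


/-- Theorem 2.6(a): if `V` satisfies the (V)-boundary conditions, then `V` is
maximal non-negative and `V^[⊥]` is maximal non-positive in `(W, [·|·])`. -/
theorem VBC_implies_maximal_nonneg
    (T0 T0t : H →ₗ.[ℂ] H) (lam mu : ℝ) (hF : IsFriedrichsPair T0 T0t lam mu)
    (hW : T0t.adjoint.domain = T0.adjoint.domain)
    (V : Submodule ℂ ↥T0t.adjoint.domain) (hV : VBC T0 T0t hW (V : Set ↥T0t.adjoint.domain)) :
    ((V : Set ↥T0t.adjoint.domain) ⊆ Wplus T0 T0t hW ∧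
      ∀ U : Submodule ℂ ↥T0t.adjoint.domain,
        (U : Set ↥T0t.adjoint.domain) ⊆ Wplus T0 T0t hW → (V : Set ↥T0t.adjoint.domain) ⊆ (U : Set ↥T0t.adjoint.domain) →
        (U : Set ↥T0t.adjoint.domain) = (V : Set ↥T0t.adjoint.domain)) ∧
    (iorth T0 T0t hW (V : Set ↥T0t.adjoint.domain) ⊆ Wminus T0 T0t hW ∧
      ∀ U : Submodule ℂ ↥T0t.adjoint.domain,
        (U : Set ↥T0t.adjoint.domain) ⊆ Wminus T0 T0t hW → iorth T0 T0t hW (V : Set ↥T0t.adjoint.domain) ⊆ (U : Set ↥T0t.adjoint.domain) →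
        (U : Set ↥T0t.adjoint.domain) = iorth T0 T0t hW (V : Set ↥T0t.adjoint.domain)) := by
  have hmu := hF.mu_pos
  refine ⟨⟨hV.1, ?_⟩, hV.2.1, ?_⟩
  · -- V is maximal non-negative
    intro U hU hVU
    refine Set.Subset.antisymm ?_ hVU
    intro u hu
    obtain ⟨v, hvV, hTv⟩ := surj_V hF hW V hV (T0t.adjoint u)
    have hzU : u - v ∈ U := U.sub_mem hu (hVU hvV)
    have hT1z : (T0t.adjoint (u - v) : H) = 0 := by
      rw [LinearPMap.map_sub, hTv, sub_self]
    have hc := S_coercive hF hW (u - v)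
    rw [inner_add_left, Complex.add_re] at hc
    have h1 : (⟪(T0t.adjoint (u - v) : H), ((u - v : ↥T0t.adjoint.domain) : H)⟫_ℂ).re = 0 := by
      rw [hT1z, inner_zero_left, Complex.zero_re]
    have h2 : 0 ≤ (bform T0 T0t hW (u - v) (u - v)).re := hU hzU
    have hb : (bform T0 T0t hW (u - v) (u - v)).re
        = (⟪(T0t.adjoint (u - v) : H), ((u - v : ↥T0t.adjoint.domain) : H)⟫_ℂ).re
          - (⟪(T1tL T0 T0t hW (u - v) : H), ((u - v : ↥T0t.adjoint.domain) : H)⟫_ℂ).re := by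
      rw [bform_eq, Complex.sub_re]
      congr 1
      rw [← inner_conj_symm]
      exact Complex.conj_re _
    have hzsq : ‖((u - v : ↥T0t.adjoint.domain) : H)‖ ^ 2 ≤ 0 := by
      have h4 : 2 * mu * ‖((u - v : ↥T0t.adjoint.domain) : H)‖ ^ 2 ≤ 2 * mu * 0 := by
        linarith
      exact le_of_mul_le_mul_left h4 (by linarith)
    have hz : ‖((u - v : ↥T0t.adjoint.domain) : H)‖ = 0 :=
      (pow_eq_zero_iff two_ne_zero).mp (le_antisymm hzsq (sq_nonneg _))
    have hz0 : u - v = 0 := Subtype.ext (norm_eq_zero.mp hz)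
    have huv : u = v := sub_eq_zero.mp hz0
    show u ∈ (V : Set ↥T0t.adjoint.domain)
    rw [huv]
    exact hvV
  · -- V^[⊥] is maximal non-positive
    intro U hU hVtU
    refine Set.Subset.antisymm ?_ hVtU
    intro u hu
    obtain ⟨v, hvVt, hTv⟩ := surj_Vt hF hW V hV (T1tL T0 T0t hW u)
    have hzU : u - v ∈ U := U.sub_mem hu (hVtU hvVt)
    have hT1tz : (T1tL T0 T0t hW (u - v) : H) = 0 := by
      rw [_root_.map_sub, hTv, sub_self]
    have hc := S_coercive hF hW (u - v)
    rw [inner_add_left, Complex.add_re] at hc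
    have h1 : (⟪(T1tL T0 T0t hW (u - v) : H), ((u - v : ↥T0t.adjoint.domain) : H)⟫_ℂ).re = 0 := by
      rw [hT1tz, inner_zero_left, Complex.zero_re]
    have h2 : (bform T0 T0t hW (u - v) (u - v)).re ≤ 0 := hU hzU
    have hb : (bform T0 T0t hW (u - v) (u - v)).re
        = (⟪(T0t.adjoint (u - v) : H), ((u - v : ↥T0t.adjoint.domain) : H)⟫_ℂ).re
          - (⟪(T1tL T0 T0t hW (u - v) : H), ((u - v : ↥T0t.adjoint.domain) : H)⟫_ℂ).re := by
      rw [bform_eq, Complex.sub_re]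
      congr 1
      rw [← inner_conj_symm]
      exact Complex.conj_re _
    have hzsq : ‖((u - v : ↥T0t.adjoint.domain) : H)‖ ^ 2 ≤ 0 := by
      have h4 : 2 * mu * ‖((u - v : ↥T0t.adjoint.domain) : H)‖ ^ 2 ≤ 2 * mu * 0 := by
        linarith
      exact le_of_mul_le_mul_left h4 (by linarith)
    have hz : ‖((u - v : ↥T0t.adjoint.domain) : H)‖ = 0 :=
      (pow_eq_zero_iff two_ne_zero).mp (le_antisymm hzsq (sq_nonneg _))
    have hz0 : u - v = 0 := Subtype.ext (norm_eq_zero.mp hz)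
    have huv : u = v := sub_eq_zero.mp hz0
    show u ∈ iorth T0 T0t hW (V : Set ↥T0t.adjoint.domain)
    rw [huv]
    exact hvVt
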